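/- Let d : {0,…,ℓ} → ℤ² with d(0)=(0,0) and each increment d(t)−d(t−1) in {(0,±1), (±1,0), (−1,1), (1,−1)}, extended piecewise-linearly to [0,ℓ]. Let d̄(t) = d(t) + w for a fixed integer vector w ∈ ℤ². If d(u) = d̄(v) for some u, v ∈ [0, ℓ], then there exist integers u', v' ∈ {0,…,ℓ} with d(u') = d̄(v'). -/

import Mathlib

set_option maxHeartbeats 1000000


lemma intcases' (m : ℤ) (h0 : -2 < (m:ℝ)) (h1 : (m:ℝ) < 2) : m = -1 ∨ m = 0 ∨ m = 1 := by
  have h0' : -2 < m := by exact_mod_cast h0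
  have h1' : m < 2 := by exact_mod_cast h1
  omega

lemma key (s r : ℝ) (a b m : ℤ × ℤ)
    (ha : a ∈ ({(0, 1), (0, -1), (1, 0), (-1, 0), (-1, 1), (1, -1)} : Set (ℤ × ℤ)))
    (hb : b ∈ ({(0, 1), (0, -1), (1, 0), (-1, 0), (-1, 1), (1, -1)} : Set (ℤ × ℤ)))
    (hs0 : 0 ≤ s) (hs1 : s < 1) (hr0 : 0 ≤ r) (hr1 : r < 1)
    (e1 : s * a.1 - r * b.1 = (m.1 : ℝ)) (e2 : s * a.2 - r * b.2 = (m.2 : ℝ)) :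
    m = 0 ∨ (m = a ∧ 0 < s) := by
  obtain ⟨m1, m2⟩ := m
  simp only [Set.mem_insert_iff, Set.mem_singleton_iff] at ha hb
  rcases ha with rfl|rfl|rfl|rfl|rfl|rfl <;> rcases hb with rfl|rfl|rfl|rfl|rfl|rfl <;>
    push_cast at e1 e2
  all_goals (
    have k1 : m1 = -1 ∨ m1 = 0 ∨ m1 = 1 := intcases' m1 (by push_cast; linarith) (by push_cast; linarith)
    have k2 : m2 = -1 ∨ m2 = 0 ∨ m2 = 1 := intcases' m2 (by push_cast; linarith) (by push_cast; linarith)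
    rcases k1 with rfl|rfl|rfl <;> rcases k2 with rfl|rfl|rfl <;>
      norm_num at e1 <;> norm_num at e2 <;> norm_num <;>
      first
        | (left; rfl)
        | (right; exact ⟨rfl, by linarith⟩)
        | linarith
        | (exfalso; linarith))


lemma exists_edge (l : ℕ) (d : ℕ → ℤ × ℤ) (D : ℝ → ℝ × ℝ)
    (hstep : ∀ t, 1 ≤ t → t ≤ l → d t - d (t - 1) ∈
      ({(0, 1), (0, -1), (1, 0), (-1, 0), (-1, 1), (1, -1)} : Set (ℤ × ℤ)))
    (hD : ∀ t : ℝ, 0 ≤ t → t ≤ l →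
      D t = (1 - (t - ⌊t⌋)) • (((d ⌊t⌋.toNat).1 : ℝ), ((d ⌊t⌋.toNat).2 : ℝ)) +
            (t - ⌊t⌋) • (((d ⌈t⌉.toNat).1 : ℝ), ((d ⌈t⌉.toNat).2 : ℝ)))
    (u : ℝ) (hu0 : 0 ≤ u) (hul : u ≤ l) :
    ∃ (i : ℕ) (s : ℝ) (a : ℤ × ℤ), i ≤ l ∧ 0 ≤ s ∧ s < 1 ∧
      a ∈ ({(0, 1), (0, -1), (1, 0), (-1, 0), (-1, 1), (1, -1)} : Set (ℤ × ℤ)) ∧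
      D u = (((d i).1 : ℝ) + s * a.1, ((d i).2 : ℝ) + s * a.2) ∧
      (s = 0 ∨ (i + 1 ≤ l ∧ d (i + 1) = d i + a)) := by
  have hfl0 : 0 ≤ ⌊u⌋ := Int.floor_nonneg.mpr hu0
  set i : ℕ := ⌊u⌋.toNat with hi
  have hic : (i : ℤ) = ⌊u⌋ := Int.toNat_of_nonneg hfl0
  have hil : i ≤ l := by
    have : ⌊u⌋ ≤ (l : ℤ) := by
      have := Int.floor_le_floor (R := ℝ) hul
      simpa using this
    omega
  set s : ℝ := u - ⌊u⌋ with hs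
  have hs0 : 0 ≤ s := by rw [hs]; linarith [Int.floor_le u]
  have hs1 : s < 1 := by rw [hs]; linarith [Int.lt_floor_add_one u]
  have hDu := hD u hu0 hul
  have hfloornat : ⌊u⌋.toNat = i := rfl
  by_cases hz : s = 0
  · refine ⟨i, 0, (0, 1), hil, le_refl _, one_pos, by simp, ?_, Or.inl rfl⟩
    have h0 : u - (⌊u⌋ : ℝ) = 0 := by rw [← hs]; exact hz
    rw [hDu, h0, hfloornat]
    simp only [sub_zero, one_smul, zero_smul, add_zero, Prod.mk.injEq]
    norm_num
  · -- u is not an integer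
    have hlt : (⌊u⌋ : ℝ) < u := by
      rcases lt_or_eq_of_le (Int.floor_le u) with h | h
      · exact h
      · exact absurd (by rw [hs, h]; ring : s = 0) hz
    have hceil : ⌈u⌉ = ⌊u⌋ + 1 := by
      have h1 : ⌈u⌉ ≤ ⌊u⌋ + 1 := Int.ceil_le_floor_add_one u
      have h2 : ⌊u⌋ < ⌈u⌉ := by
        have h3 : (⌊u⌋ : ℝ) < ⌈u⌉ := lt_of_lt_of_le hlt (Int.le_ceil u)
        exact_mod_cast h3
      omega
    have hcl : ⌈u⌉ ≤ (l : ℤ) := Int.ceil_le.mpr hul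
    have hi1 : i + 1 ≤ l := by omega
    have hceilnat : ⌈u⌉.toNat = i + 1 := by omega
    have hstepmem := hstep (i + 1) (by omega) hi1
    simp only [Nat.add_sub_cancel] at hstepmem
    refine ⟨i, s, d (i + 1) - d i, hil, hs0, hs1, hstepmem, ?_,
      Or.inr ⟨hi1, by ring⟩⟩
    rw [hDu, hceilnat, hfloornat]
    simp only [Prod.smul_mk, Prod.mk_add_mk, smul_eq_mul, Prod.mk.injEq,
      Prod.fst_sub, Prod.snd_sub]
    constructor <;> (push_cast; rw [hs]; ring)


theorem stmt5 (l : ℕ) (d : ℕ → ℤ × ℤ) (w : ℤ × ℤ) (hd0 : d 0 = (0, 0))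
    (hstep : ∀ t, 1 ≤ t → t ≤ l → d t - d (t - 1) ∈
      ({(0, 1), (0, -1), (1, 0), (-1, 0), (-1, 1), (1, -1)} : Set (ℤ × ℤ)))
    (D : ℝ → ℝ × ℝ)
    (hD : ∀ t : ℝ, 0 ≤ t → t ≤ l →
      D t = (1 - (t - ⌊t⌋)) • (((d ⌊t⌋.toNat).1 : ℝ), ((d ⌊t⌋.toNat).2 : ℝ)) +
            (t - ⌊t⌋) • (((d ⌈t⌉.toNat).1 : ℝ), ((d ⌈t⌉.toNat).2 : ℝ)))
    (u v : ℝ) (hu : u ∈ Set.Icc (0 : ℝ) l) (hv : v ∈ Set.Icc (0 : ℝ) l)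
    (huv : D u = D v + ((w.1 : ℝ), (w.2 : ℝ))) :
    ∃ u' v' : ℕ, u' ≤ l ∧ v' ≤ l ∧ d u' = d v' + w := by
  obtain ⟨hu0, hul⟩ := hu
  obtain ⟨hv0, hvl⟩ := hv
  obtain ⟨i, s, a, hil, hs0, hs1, haS, hDu, hia⟩ := exists_edge l d D hstep hD u hu0 hul
  obtain ⟨j, r, b, hjl, hr0, hr1, hbS, hDv, hjb⟩ := exists_edge l d D hstep hD v hv0 hvl
  rw [hDu, hDv] at huv
  set m : ℤ × ℤ := d j + w - d i with hm
  have e1 : s * a.1 - r * b.1 = (m.1 : ℝ) := by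
    have h1 := congrArg Prod.fst huv
    simp only [Prod.fst_add, Prod.mk_add_mk] at h1
    rw [hm]
    simp only [Prod.fst_sub, Prod.fst_add]
    push_cast
    linarith
  have e2 : s * a.2 - r * b.2 = (m.2 : ℝ) := by
    have h2 := congrArg Prod.snd huv
    simp only [Prod.snd_add, Prod.mk_add_mk] at h2
    rw [hm]
    simp only [Prod.snd_sub, Prod.snd_add]
    push_cast
    linarith
  rcases key s r a b m haS hbS hs0 hs1 hr0 hr1 e1 e2 with h | ⟨h, hspos⟩
  · exact ⟨i, j, hil, hjl, (sub_eq_zero.mp h).symm⟩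
  · obtain ⟨hi1, hstep'⟩ := hia.resolve_left (by linarith)
    refine ⟨i + 1, j, hi1, hjl, ?_⟩
    rw [hstep', ← h, hm]
    ring
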